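/- Let M be a smooth manifold and S = {W₁, …, W_r} a finite set of smooth vector fields on M. For each open Ω ⊆ M define F(Ω) to be the C^∞(Ω)-module generated by the restrictions W₁|_Ω, …, W_r|_Ω inside the vector fields on Ω. Then F (with the usual restriction maps) satisfies the sheaf gluing axiom: if {U_α} is a family of open sets with union U, and V_α ∈ F(U_α) agree on overlaps (V_α|_{U_α ∩ U_β} = V_β|_{U_α ∩ U_β} for all α, β), then the vector field V on U defined by V|_{U_α} = V_α lies in F(U). -/

import Mathlib

open scoped Manifold

/-- `V` belongs to the `C^∞(Ω)`-module of vector fields generated by `W₁, …, W_r` on the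
open set `Ω`: there are functions `a j`, smooth on `Ω`, with `V = ∑ j, a j • W j` on `Ω`. -/
def InSpanOn {E : Type*} [NormedAddCommGroup E] [NormedSpace ℝ E]
    {H : Type*} [TopologicalSpace H] (I : ModelWithCorners ℝ E H)
    {M : Type*} [TopologicalSpace M] [ChartedSpace H M]
    {r : ℕ} (W : Fin r → (x : M) → TangentSpace I x)
    (Ω : Set M) (V : (x : M) → TangentSpace I x) : Prop :=
  ∃ a : Fin r → M → ℝ,
    (∀ j, ContMDiffOn I (modelWithCornersSelf ℝ ℝ) (⊤ : ℕ∞) (a j) Ω) ∧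
    ∀ x ∈ Ω, V x = ∑ j, a j x • W j x

/-- Let `M` be a smooth manifold (possibly with boundary) and
`W₁, …, W_r` smooth vector fields on `M`.  The presheaf `Ω ↦` (`C^∞(Ω)`-module generated
by the `Wⱼ`) satisfies the sheaf gluing axiom: if `V` restricted to each member `U i` of a
family of open sets belongs to the module on `U i`, then `V` belongs to the module on
`⋃ i, U i`. -/
theorem stmt4 {E : Type*} [NormedAddCommGroup E] [NormedSpace ℝ E]
    {H : Type*} [TopologicalSpace H] (I : ModelWithCorners ℝ E H)
    {M : Type*} [TopologicalSpace M] [ChartedSpace H M] [IsManifold I (⊤ : ℕ∞) M]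
    [T2Space M] [SigmaCompactSpace M] [FiniteDimensional ℝ E]
    {r : ℕ} (W : Fin r → (x : M) → TangentSpace I x)
    (hW : ∀ j, ContMDiff I I.tangent (⊤ : ℕ∞)
      (fun x => (⟨x, W j x⟩ : TangentBundle I M)))
    {ι : Type*} (U : ι → Set M) (hU : ∀ i, IsOpen (U i))
    (V : (x : M) → TangentSpace I x)
    (hV : ∀ i, InSpanOn I W (U i) V) :
    InSpanOn I W (⋃ i, U i) V := by
  classical
  -- Work on the open submanifold `S = ⋃ i, U i`.
  set S : TopologicalSpace.Opens M := ⟨⋃ i, U i, isOpen_iUnion hU⟩ with hS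
  haveI : LocallyCompactSpace M := Manifold.locallyCompact_of_finiteDimensional I
  haveI : SecondCountableTopology E := inferInstance
  haveI : SecondCountableTopology H := I.secondCountableTopology
  haveI : SecondCountableTopology M := ChartedSpace.secondCountable_of_sigmaCompact H M
  haveI : LocallyCompactSpace S := S.isOpen.locallyCompactSpace
  haveI : SigmaCompactSpace S := sigmaCompactSpace_of_locallyCompact_secondCountable
  -- The convex constraint sets.
  set t : S → Set (Fin r → ℝ) := fun x => {c | V x.1 = ∑ j, c j • W j x.1} with ht
  have hconv : ∀ x : S, Convex ℝ (t x) := by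
    intro x c hc c' hc' p q hp hq hpq
    simp only [ht, Set.mem_setOf_eq] at hc hc' ⊢
    have : ∑ j, (p • c + q • c') j • W j x.1
        = p • ∑ j, c j • W j x.1 + q • ∑ j, c' j • W j x.1 := by
      rw [Finset.smul_sum, Finset.smul_sum, ← Finset.sum_add_distrib]
      refine Finset.sum_congr rfl fun j _ => ?_
      simp [add_smul, smul_smul]
    rw [this, ← hc, ← hc', ← add_smul, hpq, one_smul]
  -- The local condition.
  have hloc : ∀ x : S, ∃ u ∈ nhds x, ∃ g : S → (Fin r → ℝ),
      ContMDiffOn I (modelWithCornersSelf ℝ (Fin r → ℝ)) (⊤ : ℕ∞) g u ∧ ∀ y ∈ u, g y ∈ t y := by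
    intro x
    obtain ⟨i, hxi⟩ : ∃ i, x.1 ∈ U i := Set.mem_iUnion.1 x.2
    obtain ⟨a, ha, haV⟩ := hV i
    refine ⟨Subtype.val ⁻¹' U i,
      ((hU i).preimage continuous_subtype_val).mem_nhds hxi,
      fun y j => a j y.1, ?_, ?_⟩
    · rw [contMDiffOn_pi_space]
      intro j
      exact (ha j).comp contMDiff_subtype_val.contMDiffOn (fun y hy => hy)
    · intro y hy
      exact haV y.1 hy
  obtain ⟨g, hg⟩ := exists_contMDiffMap_forall_mem_convex_of_local (F := Fin r → ℝ) I hconv hloc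
  -- Glue: extend the coefficients by `0` outside `S`.
  refine ⟨fun j x => if h : x ∈ ⋃ i, U i then g ⟨x, h⟩ j else 0, ?_, ?_⟩
  · intro j x hx
    have hx' : x ∈ S := hx
    have hsmooth : ContMDiffAt I (modelWithCornersSelf ℝ ℝ) (⊤ : ℕ∞)
        (fun x => if h : x ∈ ⋃ i, U i then g ⟨x, h⟩ j else 0) x := by
      rw [← contMDiffAt_subtype_iff (U := S) (x := ⟨x, hx'⟩)]
      have : (fun y : S => if h : (y : M) ∈ ⋃ i, U i then g ⟨y, h⟩ j else 0)
          = fun y : S => g y j := by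
        funext y
        simp [y.2]
      rw [this]
      exact ((contMDiff_pi_space.1 g.contMDiff) j).contMDiffAt
    exact hsmooth.contMDiffWithinAt
  · intro x hx
    have := hg ⟨x, hx⟩
    simp only [ht, Set.mem_setOf_eq] at this
    simpa [hx] using this
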